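/- For all p ∈ (0, e^{-2}], we have p - (1-p)·log_p(1-p) ≥ p/2. -/

import Mathlib

theorem K_ge_half_p (p : ℝ) (hp : 0 < p) (hp2 : p ≤ Real.exp (-2)) :
    p - (1 - p) * (Real.log (1 - p) / Real.log p) ≥ p / 2 := by
  have hpe : Real.exp (-2) < 1 := by
    rw [Real.exp_lt_one_iff]; norm_num
  have hp1 : p < 1 := lt_of_le_of_lt hp2 hpe
  have h1p : (0:ℝ) < 1 - p := by linarith
  -- -log p ≥ 2
  have hlogp : Real.log p ≤ -2 := by
    calc Real.log p ≤ Real.log (Real.exp (-2)) := Real.log_le_log hp hp2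
    _ = -2 := Real.log_exp _
  have hlogpneg : Real.log p < 0 := by linarith
  -- -log(1-p) ≤ p/(1-p)
  have h2 : -Real.log (1 - p) ≤ p / (1 - p) := by
    have := Real.log_le_sub_one_of_pos (x := (1 - p)⁻¹) (by positivity)
    rw [Real.log_inv] at this
    have : -Real.log (1 - p) ≤ (1 - p)⁻¹ - 1 := this
    calc -Real.log (1 - p) ≤ (1 - p)⁻¹ - 1 := this
    _ = p / (1 - p) := by field_simp; ring
  have h3 : (1 - p) * (-Real.log (1 - p)) ≤ p := by
    calc (1 - p) * (-Real.log (1 - p)) ≤ (1 - p) * (p / (1 - p)) := by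
          apply mul_le_mul_of_nonneg_left h2 h1p.le
    _ = p := by field_simp
  -- main bound
  have h4 : (1 - p) * (Real.log (1 - p) / Real.log p) ≤ p / 2 := by
    have key : (1 - p) * (Real.log (1 - p) / Real.log p)
        = ((1 - p) * (-Real.log (1 - p))) / (-Real.log p) := by
      field_simp
    rw [key]
    rw [div_le_iff₀ (by linarith)]
    nlinarith [Real.log_nonpos (by linarith) (by linarith : 1 - p ≤ 1)]
  linarith
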